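/- Let G be a finite group and N a normal subgroup with G/N isomorphic to (ℤ/2ℤ) × (ℤ/2ℤ). Let ω₁ and ω₂ be two distinct nontrivial homomorphisms G → ℂˣ trivial on N, let N₁ = ker ω₁, and let ω₂₁ be the restriction of ω₂ to N₁. Let π be an irreducible finite-dimensional complex representation of G with π ≅ π ⊗ ω₁ and π ≅ π ⊗ ω₂, and write Res_{N₁} π ≅ π₁ ⊕ π₂ with π₁, π₂ irreducible and π₁ ≇ π₂. Then either π₁ ⊗ ω₂₁ ≅ π₁ (in which case also π₂ ⊗ ω₂₁ ≅ π₂), or π₁ ⊗ ω₂₁ ≅ π₂. -/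

import Mathlib

noncomputable section

namespace RestrictionMult

variable {G : Type*} [Group G]

/-- The submodule of equivariant linear maps between two representations. -/
def equivariantHoms {V W : Type*} [AddCommGroup V] [Module ℂ V]
    [AddCommGroup W] [Module ℂ W]
    (π : Representation ℂ G V) (σ : Representation ℂ G W) :
    Submodule ℂ (V →ₗ[ℂ] W) where
  carrier := {f | ∀ g v, f (π g v) = σ g (f v)}
  add_mem' := by intro f₁ f₂ h₁ h₂ g v; simp [h₁ g v, h₂ g v]
  zero_mem' := by intro g v; simp
  smul_mem' := by intro c f hf g v; simp [hf g v]

/-- Two representations are equivalent (isomorphic). -/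
def IsRepEquiv {V W : Type*} [AddCommGroup V] [Module ℂ V]
    [AddCommGroup W] [Module ℂ W]
    (π : Representation ℂ G V) (σ : Representation ℂ G W) : Prop :=
  ∃ e : V ≃ₗ[ℂ] W, ∀ g v, e (π g v) = σ g (e v)

/-- A representation is irreducible if the space is nonzero and the only invariant
submodules are `⊥` and `⊤`. -/
def IsIrreducibleRep {V : Type*} [AddCommGroup V] [Module ℂ V]
    (π : Representation ℂ G V) : Prop :=
  (∃ v : V, v ≠ 0) ∧
    ∀ U : Submodule ℂ V, (∀ g, ∀ v ∈ U, π g v ∈ U) → U = ⊥ ∨ U = ⊤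

/-- The twist of a representation by a character `χ : G →* ℂˣ`. -/
def twist {V : Type*} [AddCommGroup V] [Module ℂ V]
    (π : Representation ℂ G V) (χ : G →* ℂˣ) : Representation ℂ G V where
  toFun g := (χ g : ℂ) • π g
  map_one' := by simp
  map_mul' g h := by
    ext v
    simp only [Module.End.mul_apply, LinearMap.smul_apply, map_smul, map_mul, Units.val_mul,
      mul_smul]
    rw [smul_comm]

/-- The direct sum of two representations. -/
def dsum {V W : Type*} [AddCommGroup V] [Module ℂ V]
    [AddCommGroup W] [Module ℂ W]
    (π : Representation ℂ G V) (σ : Representation ℂ G W) :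
    Representation ℂ G (V × W) where
  toFun g := (π g).prodMap (σ g)
  map_one' := by ext v <;> simp
  map_mul' g h := by ext v <;> simp [Module.End.mul_apply]

/-- The subrepresentation on an invariant submodule. -/
def resSub {V : Type*} [AddCommGroup V] [Module ℂ V]
    (π : Representation ℂ G V) (U : Submodule ℂ V)
    (hU : ∀ g, ∀ v ∈ U, π g v ∈ U) : Representation ℂ G U where
  toFun g := (π g).restrict (fun v hv => hU g v hv)
  map_one' := by ext v; simp [LinearMap.restrict_apply]
  map_mul' g h := by ext v; simp [LinearMap.restrict_apply, Module.End.mul_apply]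

/-- The conjugate `π^g` of a representation of a normal subgroup `N`,
given by `x ↦ π (g⁻¹ x g)`. -/
def conjRep {N : Subgroup G} [N.Normal] {V : Type*} [AddCommGroup V] [Module ℂ V]
    (π : Representation ℂ N V) (g : G) : Representation ℂ N V :=
  π.comp (MulAut.conjNormal g⁻¹ : N ≃* N).toMonoidHom

/-- The space of the representation of `G` induced from a representation of a
subgroup `N`: functions `f : G → V` with `f (n * x) = π n (f x)`. -/
def indSubmodule (N : Subgroup G) {V : Type*} [AddCommGroup V] [Module ℂ V]
    (π : Representation ℂ N V) : Submodule ℂ (G → V) where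
  carrier := {f | ∀ (n : N) (x : G), f (n * x) = π n (f x)}
  add_mem' := by intro f₁ f₂ h₁ h₂ n x; simp [h₁ n x, h₂ n x]
  zero_mem' := by intro n x; simp
  smul_mem' := by intro c f hf n x; simp [hf n x]

/-- The representation of `G` induced from a representation `π` of a subgroup `N`,
acting by right translation on `indSubmodule N π`. -/
def ind (N : Subgroup G) {V : Type*} [AddCommGroup V] [Module ℂ V]
    (π : Representation ℂ N V) : Representation ℂ G (indSubmodule N π) where
  toFun g :=
    { toFun := fun f => ⟨fun x => (f : G → V) (x * g),
        fun n x => by simpa [mul_assoc] using f.2 n (x * g)⟩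
      map_add' := fun f₁ f₂ => by ext x; rfl
      map_smul' := fun c f => by ext x; rfl }
  map_one' := by ext f x; simp
  map_mul' g h := by ext f x; simp [Module.End.mul_apply, mul_assoc]


section Helpers

variable {H : Type*} [Group H] {V W U V' W' : Type*}
  [AddCommGroup V] [Module ℂ V] [AddCommGroup W] [Module ℂ W]
  [AddCommGroup U] [Module ℂ U]
  [AddCommGroup V'] [Module ℂ V'] [AddCommGroup W'] [Module ℂ W']

lemma repEquiv_symm {π : Representation ℂ H V} {σ : Representation ℂ H W}
    (h : IsRepEquiv π σ) : IsRepEquiv σ π := by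
  obtain ⟨e, he⟩ := h
  refine ⟨e.symm, fun g w => e.injective ?_⟩
  rw [e.apply_symm_apply, he, e.apply_symm_apply]

lemma repEquiv_trans {π : Representation ℂ H V} {σ : Representation ℂ H W}
    {τ : Representation ℂ H U} (h₁ : IsRepEquiv π σ) (h₂ : IsRepEquiv σ τ) :
    IsRepEquiv π τ := by
  obtain ⟨e₁, he₁⟩ := h₁
  obtain ⟨e₂, he₂⟩ := h₂
  exact ⟨e₁.trans e₂, fun g v => by simp [LinearEquiv.trans_apply, he₁, he₂]⟩

lemma twist_apply (π : Representation ℂ H V) (χ : H →* ℂˣ) (g : H) (v : V) :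
    twist π χ g v = (χ g : ℂ) • π g v := rfl

lemma dsum_apply (π : Representation ℂ H V) (σ : Representation ℂ H W) (g : H) (x : V × W) :
    dsum π σ g x = (π g x.1, σ g x.2) := rfl

lemma twist_congr {π : Representation ℂ H V} {σ : Representation ℂ H W}
    (χ : H →* ℂˣ) (h : IsRepEquiv π σ) : IsRepEquiv (twist π χ) (twist σ χ) := by
  obtain ⟨e, he⟩ := h
  exact ⟨e, fun g v => by simp [twist_apply, map_smul, he]⟩

lemma twist_twist (π : Representation ℂ H V) (χ : H →* ℂˣ)
    (hχ : ∀ g, χ g * χ g = 1) : twist (twist π χ) χ = π := by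
  refine MonoidHom.ext fun g => LinearMap.ext fun v => ?_
  have h1 : (χ g : ℂ) * (χ g : ℂ) = 1 := by
    rw [← Units.val_mul, hχ g, Units.val_one]
  show twist (twist π χ) χ g v = π g v
  rw [twist_apply, twist_apply, smul_smul, h1, one_smul]

lemma twist_dsum (π : Representation ℂ H V) (σ : Representation ℂ H W) (χ : H →* ℂˣ) :
    twist (dsum π σ) χ = dsum (twist π χ) (twist σ χ) := by
  refine MonoidHom.ext fun g => LinearMap.ext fun x => ?_
  show twist (dsum π σ) χ g x = dsum (twist π χ) (twist σ χ) g x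
  rw [twist_apply, dsum_apply, dsum_apply, twist_apply, twist_apply]
  rfl

lemma twist_irred {π : Representation ℂ H V} (χ : H →* ℂˣ)
    (h : IsIrreducibleRep π) : IsIrreducibleRep (twist π χ) := by
  refine ⟨h.1, fun Usub hU => h.2 Usub fun g v hv => ?_⟩
  have h1 := hU g v hv
  rw [twist_apply] at h1
  have h2 := Usub.smul_mem ((χ g : ℂ)⁻¹) h1
  rwa [inv_smul_smul₀ (Units.ne_zero (χ g))] at h2

lemma schur {π : Representation ℂ H V} {σ : Representation ℂ H W}
    (hπ : IsIrreducibleRep π) (hσ : IsIrreducibleRep σ)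
    (f : V →ₗ[ℂ] W) (hf : ∀ g v, f (π g v) = σ g (f v)) (hf0 : f ≠ 0) :
    IsRepEquiv π σ := by
  have hker : ∀ g, ∀ v ∈ LinearMap.ker f, π g v ∈ LinearMap.ker f := by
    intro g v hv
    rw [LinearMap.mem_ker] at hv ⊢
    rw [hf, hv, map_zero]
  have hrange : ∀ g, ∀ w ∈ LinearMap.range f, σ g w ∈ LinearMap.range f := by
    rintro g w ⟨v, rfl⟩
    exact ⟨π g v, hf g v⟩
  rcases hπ.2 _ hker with h | h
  · rcases hσ.2 _ hrange with h' | h'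
    · exact absurd (LinearMap.range_eq_bot.mp h') hf0
    · exact ⟨LinearEquiv.ofBijective f
        ⟨LinearMap.ker_eq_bot.mp h, LinearMap.range_eq_top.mp h'⟩, fun g v => hf g v⟩
  · exact absurd (LinearMap.ker_eq_top.mp h) hf0

lemma dsum_comm (π : Representation ℂ H V) (σ : Representation ℂ H W) :
    IsRepEquiv (dsum π σ) (dsum σ π) :=
  ⟨LinearEquiv.prodComm ℂ V W, fun g x => rfl⟩

lemma dsum_component_left {π₁ : Representation ℂ H V} {π₂ : Representation ℂ H W}
    {σ₁ : Representation ℂ H V'} {σ₂ : Representation ℂ H W'}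
    (hπ₁ : IsIrreducibleRep π₁) (hσ₁ : IsIrreducibleRep σ₁) (hσ₂ : IsIrreducibleRep σ₂)
    (h : IsRepEquiv (dsum π₁ π₂) (dsum σ₁ σ₂)) :
    IsRepEquiv π₁ σ₁ ∨ IsRepEquiv π₁ σ₂ := by
  obtain ⟨e, he⟩ := h
  have key : ∀ g v, e (π₁ g v, (0 : W)) = (σ₁ g (e (v, 0)).1, σ₂ g (e (v, 0)).2) := by
    intro g v
    have h2 := he g (v, 0)
    rw [dsum_apply] at h2
    simp only [map_zero] at h2
    rw [h2, dsum_apply]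
  set f₁ : V →ₗ[ℂ] V' :=
    (LinearMap.fst ℂ V' W') ∘ₗ (e : V × W →ₗ[ℂ] V' × W') ∘ₗ LinearMap.inl ℂ V W with hf₁def
  set f₂ : V →ₗ[ℂ] W' :=
    (LinearMap.snd ℂ V' W') ∘ₗ (e : V × W →ₗ[ℂ] V' × W') ∘ₗ LinearMap.inl ℂ V W with hf₂def
  have hf₁app : ∀ v, f₁ v = (e (v, 0)).1 := fun v => rfl
  have hf₂app : ∀ v, f₂ v = (e (v, 0)).2 := fun v => rfl
  have hf₁ : ∀ g v, f₁ (π₁ g v) = σ₁ g (f₁ v) := by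
    intro g v; rw [hf₁app, hf₁app, key]
  have hf₂ : ∀ g v, f₂ (π₁ g v) = σ₂ g (f₂ v) := by
    intro g v; rw [hf₂app, hf₂app, key]
  by_cases hf : f₁ = 0
  · right
    refine schur hπ₁ hσ₂ f₂ hf₂ ?_
    intro hf₂0
    obtain ⟨v, hv⟩ := hπ₁.1
    have h1 : (e (v, 0)).1 = 0 := by rw [← hf₁app, hf]; rfl
    have h2 : (e (v, 0)).2 = 0 := by rw [← hf₂app, hf₂0]; rfl
    have h3 : e (v, 0) = 0 := by
      rw [show e (v, 0) = ((e (v, 0)).1, (e (v, 0)).2) from rfl, h1, h2]; rfl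
    have h4 : ((v, 0) : V × W) = 0 := by
      apply e.injective; rw [h3, map_zero]
    exact hv (congrArg Prod.fst h4)
  · left
    exact schur hπ₁ hσ₁ f₁ hf₁ hf

end Helpers

/-- With `N ⊴ G`, `G/N ≅ ℤ/2 × ℤ/2`, distinct nontrivial characters
`ω₁, ω₂` of `G` trivial on `N`, `N₁ = ker ω₁`, `ω₂₁ = ω₂|_{N₁}`, and `π` an irreducible
representation of `G` with `π ≅ π ⊗ ω₁` and `π ≅ π ⊗ ω₂`, write
`Res_{N₁} π ≅ π₁ ⊕ π₂` with `π₁ ≇ π₂` irreducible.  Then either `π₁ ⊗ ω₂₁ ≅ π₁`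
(in which case also `π₂ ⊗ ω₂₁ ≅ π₂`), or `π₁ ⊗ ω₂₁ ≅ π₂`. -/
theorem twist_components_dichotomy
    {G : Type*} [Group G] [Finite G] (N : Subgroup G) [N.Normal]
    (hquot : Nonempty ((G ⧸ N) ≃* Multiplicative (ZMod 2) × Multiplicative (ZMod 2)))
    (ω₁ ω₂ : G →* ℂˣ) (hne : ω₁ ≠ ω₂) (hω₁ : ω₁ ≠ 1) (hω₂ : ω₂ ≠ 1)
    (hω₁N : ∀ n ∈ N, ω₁ n = 1) (hω₂N : ∀ n ∈ N, ω₂ n = 1)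
    {V V₁ V₂ : Type*}
    [AddCommGroup V] [Module ℂ V] [FiniteDimensional ℂ V]
    [AddCommGroup V₁] [Module ℂ V₁] [FiniteDimensional ℂ V₁]
    [AddCommGroup V₂] [Module ℂ V₂] [FiniteDimensional ℂ V₂]
    (π : Representation ℂ G V) (hπ : IsIrreducibleRep π)
    (h₁ : IsRepEquiv π (twist π ω₁)) (h₂ : IsRepEquiv π (twist π ω₂))
    (π₁ : Representation ℂ ω₁.ker V₁) (hπ₁ : IsIrreducibleRep π₁)
    (π₂ : Representation ℂ ω₁.ker V₂) (hπ₂ : IsIrreducibleRep π₂)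
    (hπ₁₂ : ¬ IsRepEquiv π₁ π₂)
    (hres : IsRepEquiv (π.comp ω₁.ker.subtype) (dsum π₁ π₂)) :
    (IsRepEquiv (twist π₁ (ω₂.comp ω₁.ker.subtype)) π₁ ∧
        IsRepEquiv (twist π₂ (ω₂.comp ω₁.ker.subtype)) π₂) ∨
      IsRepEquiv (twist π₁ (ω₂.comp ω₁.ker.subtype)) π₂ := by
  obtain ⟨φ⟩ := hquot
  set χ : ω₁.ker →* ℂˣ := ω₂.comp ω₁.ker.subtype with hχdef
  have hsq : ∀ g : G, g * g ∈ N := by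
    intro g
    have h1 : ∀ x : Multiplicative (ZMod 2) × Multiplicative (ZMod 2), x * x = 1 := by decide
    have h2 : ((g * g : G) : G ⧸ N) = 1 := by
      apply φ.injective
      rw [QuotientGroup.mk_mul, map_mul, h1, map_one]
    rwa [QuotientGroup.eq_one_iff] at h2
  have hχ2 : ∀ n : ω₁.ker, χ n * χ n = 1 := by
    intro n
    have h1 : χ n * χ n = ω₂ ((n : G) * n) := by
      rw [map_mul]; rfl
    rw [h1]
    exact hω₂N _ (hsq n)
  obtain ⟨e₂, he₂⟩ := h₂
  have hres2 : IsRepEquiv (π.comp ω₁.ker.subtype) (twist (π.comp ω₁.ker.subtype) χ) :=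
    ⟨e₂, fun n v => he₂ (n : G) v⟩
  have E : IsRepEquiv (dsum π₁ π₂) (dsum (twist π₁ χ) (twist π₂ χ)) := by
    have h3 := twist_congr χ hres
    rw [twist_dsum] at h3
    exact repEquiv_trans (repEquiv_trans (repEquiv_symm hres) hres2) h3
  have hi₁ := twist_irred χ hπ₁
  have hi₂ := twist_irred χ hπ₂
  rcases dsum_component_left hπ₁ hi₁ hi₂ E with h | h
  · left
    refine ⟨repEquiv_symm h, ?_⟩
    have E' : IsRepEquiv (dsum π₂ π₁) (dsum (twist π₂ χ) (twist π₁ χ)) :=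
      repEquiv_trans (repEquiv_trans (dsum_comm _ _) E) (dsum_comm _ _)
    rcases dsum_component_left hπ₂ hi₂ hi₁ E' with h' | h'
    · exact repEquiv_symm h'
    · exact absurd (repEquiv_symm (repEquiv_trans h' (repEquiv_symm h))) hπ₁₂
  · right
    have h4 := twist_congr χ h
    rwa [twist_twist π₂ χ hχ2] at h4

end RestrictionMult
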